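/- Let A be a commutative ring, S ⊆ A a multiplicative subset, M an A-module, G a finitely presented S⁻¹A-module and u : G → S⁻¹M an S⁻¹A-linear map. Then there exists a finitely presented A-module H, an A-linear map v : H → M, and an isomorphism θ : S⁻¹H → G of S⁻¹A-modules such that the localization S⁻¹v : S⁻¹H → S⁻¹M equals u ∘ θ. -/

import Mathlib

universe u v w

open IsLocalizedModule LocalizedModule

/-- Data witnessing that the map `u : G → S⁻¹M` from a finitely presented `S⁻¹A`-module `G`
descends to a map of `A`-modules `v : H → M` with `H` finitely presented: an isomorphism
`θ : S⁻¹H ≃ G` such that `S⁻¹v = u ∘ θ` (expressed on the generators `h/1` of `S⁻¹H`). -/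
structure FinitelyPresentedDescent (A : Type u) [CommRing A] (S : Submonoid A)
    (M : Type v) [AddCommGroup M] [Module A M]
    (G : Type w) [AddCommGroup G] [Module (Localization S) G]
    (u : G →ₗ[Localization S] LocalizedModule S M) where
  /-- the finitely presented `A`-module -/
  H : Type (max u v w)
  [addCommGroup : AddCommGroup H]
  [module : Module A H]
  fp : Module.FinitePresentation A H
  /-- the `A`-linear map to `M` -/
  v : H →ₗ[A] M
  /-- the isomorphism `S⁻¹H ≃ G` -/
  θ : LocalizedModule S H ≃ₗ[Localization S] G
  /-- `S⁻¹v = u ∘ θ`: both `Localization S`-linear maps agree on the elements `h/1`,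
  which generate `S⁻¹H` over `S⁻¹A`. -/
  compat : ∀ h : H, u (θ (LocalizedModule.mkLinearMap S H h))
    = LocalizedModule.mkLinearMap S M (v h)

attribute [instance] FinitelyPresentedDescent.addCommGroup FinitelyPresentedDescent.module

/-- Let `A` be a commutative ring, `S ⊆ A` a multiplicative subset, `M` an
`A`-module, `G` a finitely presented `S⁻¹A`-module and `u : G → S⁻¹M` an `S⁻¹A`-linear map.
Then there exist a finitely presented `A`-module `H`, an `A`-linear map `v : H → M` and an
isomorphism `θ : S⁻¹H ≃ G` with `S⁻¹v = u ∘ θ`. -/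
theorem exists_finitelyPresented_descent
    (A : Type u) [CommRing A] (S : Submonoid A)
    (M : Type v) [AddCommGroup M] [Module A M]
    (G : Type w) [AddCommGroup G] [Module (Localization S) G]
    (hG : Module.FinitePresentation (Localization S) G)
    (u : G →ₗ[Localization S] LocalizedModule S M) :
    Nonempty (FinitelyPresentedDescent A S M G u) := by
  classical
  letI : Module A G := Module.compHom G (algebraMap A (Localization S))
  haveI : IsScalarTower A (Localization S) G :=
    ⟨fun a r x => by
      show (a • r) • x = algebraMap A (Localization S) a • (r • x)
      rw [Algebra.smul_def, mul_smul]⟩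
  haveI : SMulCommClass A A G :=
    ⟨fun a b x => by
      show algebraMap A (Localization S) a • algebraMap A (Localization S) b • x =
        algebraMap A (Localization S) b • algebraMap A (Localization S) a • x
      rw [smul_comm]⟩
  haveI : IsLocalizedModule S (LinearMap.id : G →ₗ[A] G) :=
    isLocalizedModule_id S G (Localization S)
  obtain ⟨n, g, hg⟩ := Module.Finite.exists_fin (R := Localization S) (M := G)
  set F := (Fin n → A) with hF
  haveI : Module.FinitePresentation A F := Module.finitePresentation_of_projective A F
  let q₀ : F →ₗ[A] G := Fintype.linearCombination A g
  let q : LocalizedModule S F →ₗ[Localization S] G :=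
    IsLocalizedModule.mapExtendScalars S (LocalizedModule.mkLinearMap S F)
      (LinearMap.id : G →ₗ[A] G) (Localization S) q₀
  have hq0 : ∀ x : F, q (LocalizedModule.mkLinearMap S F x) = q₀ x := fun x => by
    have := IsLocalizedModule.map_apply S (LocalizedModule.mkLinearMap S F)
      (LinearMap.id : G →ₗ[A] G) q₀ x
    simpa [q] using this
  have hqsurj : Function.Surjective q := by
    rw [← LinearMap.range_eq_top, ← top_le_iff, ← hg, Submodule.span_le]
    rintro _ ⟨i, rfl⟩
    exact ⟨LocalizedModule.mkLinearMap S F (Pi.single i 1),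
      by rw [hq0]; show (Fintype.linearCombination A g) (Pi.single i 1) = g i
         rw [Fintype.linearCombination_apply_single, one_smul]⟩
  have hker : (LinearMap.ker q).FG := Module.FinitePresentation.fg_ker q hqsurj
  obtain ⟨t, ht⟩ := hker
  have hrep : ∀ w : LocalizedModule S F, ∃ p : F × S,
      IsLocalizedModule.mk' (LocalizedModule.mkLinearMap S F) p.1 p.2 = w :=
    fun w => IsLocalizedModule.mk'_surjective S _ w
  choose rep hrep' using hrep
  let X : Set F := (fun w => (rep w).1) '' (t : Set (LocalizedModule S F))
  let K₀ : Submodule A F := Submodule.span A X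
  have hK₀fg : K₀.FG := Submodule.fg_span (((t : Set (LocalizedModule S F))).toFinite.image _)
  have hKloc : K₀.localized S = LinearMap.ker q := by
    show Submodule.localized' (Localization S) S (LocalizedModule.mkLinearMap S F)
      (Submodule.span A X) = LinearMap.ker q
    rw [Submodule.localized'_span]
    apply le_antisymm
    · rw [Submodule.span_le]
      rintro _ ⟨_, ⟨w, hw, rfl⟩, rfl⟩
      have h1 : LocalizedModule.mkLinearMap S F (rep w).1 = (rep w).2 • w := by
        have h2 := IsLocalizedModule.mk'_cancel' (LocalizedModule.mkLinearMap S F)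
          (rep w).1 (rep w).2
        rw [hrep' w] at h2
        exact h2.symm
      have hwker : w ∈ LinearMap.ker q := ht ▸ Submodule.subset_span hw
      rw [SetLike.mem_coe, h1, Submonoid.smul_def,
        ← algebraMap_smul (Localization S) ((rep w).2 : A) w]
      exact Submodule.smul_mem _ _ hwker
    · rw [← ht, Submodule.span_le]
      intro w hw
      have h2 := IsLocalizedModule.mk'_smul_mk' (Localization S)
        (LocalizedModule.mkLinearMap S F) (1 : A) (rep w).1 (rep w).2 1
      simp only [IsLocalizedModule.mk'_one, one_smul, mul_one] at h2
      rw [hrep' w] at h2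
      rw [SetLike.mem_coe, ← h2]
      exact Submodule.smul_mem _ _
        (Submodule.subset_span ⟨_, ⟨w, hw, rfl⟩, rfl⟩)
  let e : ((LocalizedModule S F) ⧸ (K₀.localized S)) ≃ₗ[Localization S] G :=
    (Submodule.quotEquivOfEq _ _ hKloc).trans (q.quotKerEquivOfSurjective hqsurj)
  let f₁ : (F ⧸ K₀) →ₗ[A] G :=
    (e.restrictScalars A).toLinearMap ∘ₗ K₀.toLocalizedQuotient S
  haveI hl₁ : IsLocalizedModule S f₁ := by
    unfold f₁
    infer_instance
  haveI hfp₁ : Module.FinitePresentation A (F ⧸ K₀) :=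
    Module.finitePresentation_of_surjective K₀.mkQ (Submodule.mkQ_surjective K₀)
      (by rw [Submodule.ker_mkQ]; exact hK₀fg)
  let H : Type (max u v w) := ULift.{max v w} (F ⧸ K₀)
  let eH : H ≃ₗ[A] (F ⧸ K₀) := ULift.moduleEquiv
  let f₂ : H →ₗ[A] G := f₁ ∘ₗ eH.toLinearMap
  haveI hl₂ : IsLocalizedModule S f₂ := by
    unfold f₂
    infer_instance
  haveI hfpH : Module.FinitePresentation A H :=
    Module.finitePresentation_of_surjective eH.symm.toLinearMap eH.symm.surjective
      (by rw [LinearMap.ker_eq_bot.mpr eH.symm.injective]; exact Submodule.fg_bot)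
  let θ₀ : LocalizedModule S H ≃ₗ[A] G := IsLocalizedModule.iso S f₂
  have hθ₀ : ∀ h : H, θ₀ (LocalizedModule.mkLinearMap S H h) = f₂ h := fun h => by
    have h1 := LinearMap.congr_fun (IsLocalizedModule.iso_symm_comp S f₂) h
    simp only [LinearMap.coe_comp, LinearEquiv.coe_coe, Function.comp_apply] at h1 ⊢
    rw [← h1, LinearEquiv.apply_symm_apply]
  let θfull : LocalizedModule S H ≃ₗ[Localization S] G :=
    LinearEquiv.ofLinear
      (θ₀.toLinearMap.extendScalarsOfIsLocalization S (Localization S))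
      (θ₀.symm.toLinearMap.extendScalarsOfIsLocalization S (Localization S))
      (by ext x; simp) (by ext x; simp)
  have hθfull : ∀ x, θfull x = θ₀ x := fun _ => rfl
  let w₀ : H →ₗ[A] LocalizedModule S M :=
    (u.restrictScalars A) ∘ₗ ((θfull.toLinearMap.restrictScalars A) ∘ₗ
      LocalizedModule.mkLinearMap S H)
  obtain ⟨v, s, hv⟩ :=
    Module.FinitePresentation.exists_lift_of_isLocalizedModule S
      (LocalizedModule.mkLinearMap S M) w₀
  have hsu : IsUnit (algebraMap A (Localization S) (s : A)) :=
    IsLocalization.map_units (Localization S) s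
  let θ' : LocalizedModule S H ≃ₗ[Localization S] G :=
    (LinearEquiv.smulOfUnit hsu.unit).trans θfull
  have compat : ∀ h : H, u (θ' (LocalizedModule.mkLinearMap S H h))
      = LocalizedModule.mkLinearMap S M (v h) := by
    intro h
    have h1 := LinearMap.congr_fun hv h
    simp only [LinearMap.coe_comp, Function.comp_apply, LinearMap.smul_apply] at h1
    -- h1 : mk (v h) = s • w₀ h  (or reversed)
    have h2 : θ' (LocalizedModule.mkLinearMap S H h)
        = (algebraMap A (Localization S) (s : A)) • θfull (LocalizedModule.mkLinearMap S H h) := by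
      show θfull (hsu.unit • _) = _
      rw [Units.smul_def, IsUnit.unit_spec, map_smul]
    rw [h2, map_smul, h1, Submonoid.smul_def,
      ← algebraMap_smul (Localization S) (s : A) (w₀ h)]
    rfl
  exact ⟨⟨H, hfpH, v, θ', compat⟩⟩
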